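/- Let S be an LD-set of a graph G. If there is no vertex w ∈ V \ S with S ⊆ N_G(w), then S is an LD-set of the complement Ḡ; otherwise, if w ∈ V \ S satisfies S ⊆ N_G(w), then S ∪ {w} is an LD-set of Ḡ. -/
import Mathlib


open SimpleGraph

/-- `D` is a locating-dominating set (LD-set) of `G`: for every two distinct vertices
`u, v ∉ D`, the sets `N(u) ∩ D` and `N(v) ∩ D` are nonempty and distinct. -/
def IsLDSet {V : Type*} (G : SimpleGraph V) (D : Set V) : Prop :=
  ∀ u ∉ D, ∀ v ∉ D, u ≠ v →
    (G.neighborSet u ∩ D).Nonempty ∧ (G.neighborSet v ∩ D).Nonempty ∧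
    G.neighborSet u ∩ D ≠ G.neighborSet v ∩ D

lemma compl_nbhd_inter {V : Type*} (G : SimpleGraph V) (S : Set V) {x : V} (hx : x ∉ S) :
    Gᶜ.neighborSet x ∩ S = S \ G.neighborSet x := by
  ext s
  simp only [Set.mem_inter_iff, mem_neighborSet, compl_adj, Set.mem_diff]
  constructor
  · rintro ⟨⟨_, hadj⟩, hs⟩; exact ⟨hs, hadj⟩
  · rintro ⟨hs, hadj⟩; exact ⟨⟨fun h => hx (h ▸ hs), hadj⟩, hs⟩

lemma diff_eq_imp_inter_eq {V : Type*} (S A B : Set V) (h : S \ A = S \ B) :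
    A ∩ S = B ∩ S := by
  ext s
  have := Set.ext_iff.mp h s
  simp only [Set.mem_diff] at this
  simp only [Set.mem_inter_iff]
  constructor
  · rintro ⟨hA, hs⟩
    by_contra hB
    exact (this.mpr ⟨hs, fun hb => (hB ⟨hb, hs⟩)⟩).2 hA
  · rintro ⟨hB, hs⟩
    by_contra hA
    exact (this.mp ⟨hs, fun ha => (hA ⟨ha, hs⟩)⟩).2 hB

/-- If `S` is an LD-set of `G`, then: if no vertex `w ∉ S` satisfies `S ⊆ N_G(w)`, then
`S` is an LD-set of `Ḡ`; and if `w ∉ S` satisfies `S ⊆ N_G(w)`, then `S ∪ {w}` is an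
LD-set of `Ḡ`. -/
theorem isLDSet_compl {V : Type*} (G : SimpleGraph V) (S : Set V)
    (hS : IsLDSet G S) :
    ((∀ w ∉ S, ¬ S ⊆ G.neighborSet w) → IsLDSet Gᶜ S) ∧
    (∀ w ∉ S, S ⊆ G.neighborSet w → IsLDSet Gᶜ (S ∪ {w})) := by
  constructor
  · intro hno u hu v hv huv
    refine ⟨?_, ?_, ?_⟩
    · rw [compl_nbhd_inter G S hu]
      rcases Set.not_subset.mp (hno u hu) with ⟨s, hsS, hsn⟩
      exact ⟨s, hsS, hsn⟩
    · rw [compl_nbhd_inter G S hv]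
      rcases Set.not_subset.mp (hno v hv) with ⟨s, hsS, hsn⟩
      exact ⟨s, hsS, hsn⟩
    · rw [compl_nbhd_inter G S hu, compl_nbhd_inter G S hv]
      intro h
      exact (hS u hu v hv huv).2.2 (diff_eq_imp_inter_eq S _ _ h)
  · intro w hw hsub u hu v hv huv
    have huS : u ∉ S := fun h => hu (Or.inl h)
    have hvS : v ∉ S := fun h => hv (Or.inl h)
    have huw : u ≠ w := fun h => hu (Or.inr h)
    have hvw : v ≠ w := fun h => hv (Or.inr h)
    have hnsub : ∀ x, x ∉ S → x ≠ w → ¬ S ⊆ G.neighborSet x := by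
      intro x hxS hxw hx
      apply (hS x hxS w hw hxw).2.2
      rw [Set.inter_eq_right.mpr hx, Set.inter_eq_right.mpr hsub]
    have hne : ∀ x, x ∉ S → x ≠ w → (Gᶜ.neighborSet x ∩ (S ∪ {w})).Nonempty := by
      intro x hxS hxw
      rcases Set.not_subset.mp (hnsub x hxS hxw) with ⟨s, hsS, hsn⟩
      refine ⟨s, ?_, Or.inl hsS⟩
      have : s ∈ S \ G.neighborSet x := ⟨hsS, hsn⟩
      rw [← compl_nbhd_inter G S hxS] at this
      exact this.1
    refine ⟨hne u huS huw, hne v hvS hvw, ?_⟩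
    intro h
    apply (hS u huS v hvS huv).2.2
    have h2 : Gᶜ.neighborSet u ∩ S = Gᶜ.neighborSet v ∩ S := by
      ext s
      have := Set.ext_iff.mp h s
      simp only [Set.mem_inter_iff, Set.mem_union, Set.mem_singleton_iff] at this
      simp only [Set.mem_inter_iff]
      constructor
      · rintro ⟨ha, hs⟩
        exact ⟨((this.mp ⟨ha, Or.inl hs⟩).1), hs⟩
      · rintro ⟨ha, hs⟩
        exact ⟨((this.mpr ⟨ha, Or.inl hs⟩).1), hs⟩
    rw [compl_nbhd_inter G S huS, compl_nbhd_inter G S hvS] at h2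
    exact diff_eq_imp_inter_eq S _ _ h2
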